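/- Let A ∈ ℝ^{n×n}, B ∈ ℝ^{n×q}. Assume A + A^T is negative definite on the kernel of B^T (x^T(A+A^T)x < 0 for every nonzero x with B^T x = 0) and that the largest eigenvalue of (A+A^T)/2 is positive. Then the set W of weakly dissipating feedback matrices K ∈ ℝ^{q×n} is nonempty, and the infimum of the Frobenius norm ‖K‖_F over K ∈ W is attained, i.e. there exists K_* ∈ W with ‖K_*‖_F = inf{‖K‖_F : K ∈ W}. -/

import Mathlib

open Matrix

/-- The Frobenius norm of a real matrix. -/
noncomputable def frobNorm {q n : ℕ} (K : Matrix (Fin q) (Fin n) ℝ) : ℝ :=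
  Real.sqrt (∑ i, ∑ j, (K i j) ^ 2)

/-- The set of weakly dissipating feedback matrices for the pair `(A, B)`:
those `K` for which `(A−BK)+(A−BK)ᵀ` is negative semidefinite and singular. -/
def weaklyDissipating {n q : ℕ} (A : Matrix (Fin n) (Fin n) ℝ)
    (B : Matrix (Fin n) (Fin q) ℝ) : Set (Matrix (Fin q) (Fin n) ℝ) :=
  {K | (-((A - B * K) + (A - B * K)ᵀ)).PosSemidef ∧
    ¬ IsUnit ((A - B * K) + (A - B * K)ᵀ).det}

namespace WDAux
variable {n q : ℕ}

def qf (M : Matrix (Fin n) (Fin n) ℝ) (x : Fin n → ℝ) : ℝ := x ⬝ᵥ (M *ᵥ x)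

lemma dot_self_nonneg (v : Fin n → ℝ) : 0 ≤ v ⬝ᵥ v := by
  simp only [dotProduct]
  exact Finset.sum_nonneg fun i _ => mul_self_nonneg _

lemma qf_BBt (B : Matrix (Fin n) (Fin q) ℝ) (x : Fin n → ℝ) :
    qf (B * Bᵀ) x = (Bᵀ *ᵥ x) ⬝ᵥ (Bᵀ *ᵥ x) := by
  rw [qf, ← mulVec_mulVec, dotProduct_mulVec, ← mulVec_transpose]

lemma qf_smul_vec (M : Matrix (Fin n) (Fin n) ℝ) (c : ℝ) (x : Fin n → ℝ) :
    qf M (c • x) = c ^ 2 * qf M x := by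
  simp only [qf, mulVec_smul, dotProduct_smul, smul_dotProduct, smul_eq_mul]
  ring

lemma continuous_qf (M : Matrix (Fin n) (Fin n) ℝ) : Continuous (qf M) :=
  continuous_id.dotProduct (continuous_const.matrix_mulVec continuous_id)

lemma Mt_eq (A : Matrix (Fin n) (Fin n) ℝ) (B : Matrix (Fin n) (Fin q) ℝ) (t : ℝ) :
    (A - B * (t • Bᵀ)) + (A - B * (t • Bᵀ))ᵀ
      = (A + Aᵀ) - t • (B * Bᵀ) - t • (B * Bᵀ) := by
  rw [transpose_sub, transpose_mul, transpose_smul, transpose_transpose,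
    Matrix.mul_smul, Matrix.smul_mul]
  abel

lemma herm_aux (X : Matrix (Fin n) (Fin n) ℝ) : (-(X + Xᵀ)).IsHermitian := by
  show _ = _
  ext i j
  simp [conjTranspose_apply]
  ring

lemma qf_Mt (A : Matrix (Fin n) (Fin n) ℝ) (B : Matrix (Fin n) (Fin q) ℝ) (t : ℝ)
    (x : Fin n → ℝ) :
    qf ((A - B * (t • Bᵀ)) + (A - B * (t • Bᵀ))ᵀ) x
      = qf (A + Aᵀ) x - 2 * t * qf (B * Bᵀ) x := by
  rw [Mt_eq]
  simp only [qf, sub_mulVec, dotProduct_sub, smul_mulVec, dotProduct_smul, smul_eq_mul]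
  ring

theorem exists_wd (A : Matrix (Fin n) (Fin n) ℝ) (B : Matrix (Fin n) (Fin q) ℝ)
    (hker : ∀ x : Fin n → ℝ, x ≠ 0 → Bᵀ *ᵥ x = 0 → x ⬝ᵥ ((A + Aᵀ) *ᵥ x) < 0)
    (hSym : ((1 / 2 : ℝ) • (A + Aᵀ)).IsHermitian)
    (hpos : ∃ i, 0 < hSym.eigenvalues i) :
    ∃ K : Matrix (Fin q) (Fin n) ℝ,
        (-((A - B * K) + (A - B * K)ᵀ)).PosSemidef ∧
        ¬ IsUnit ((A - B * K) + (A - B * K)ᵀ).det := by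
  obtain ⟨i0, hi0⟩ := hpos
  set P := B * Bᵀ with hP
  set h : (Fin n → ℝ) → ℝ := qf (A + Aᵀ) with hh
  set g : (Fin n → ℝ) → ℝ := qf P with hg
  have hg0 : ∀ x, 0 ≤ g x := fun x => by
    rw [hg, qf_BBt]; exact dot_self_nonneg _
  have hgz : ∀ x, g x = 0 → Bᵀ *ᵥ x = 0 := fun x hx => by
    rw [hg, qf_BBt] at hx; exact dotProduct_self_eq_zero.mp hx
  set sph := Metric.sphere (0 : Fin n → ℝ) 1 with hsph
  have hsph_cpt : IsCompact sph := isCompact_sphere 0 1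
  have hmem_sph : ∀ {x : Fin n → ℝ}, x ∈ sph ↔ ‖x‖ = 1 := fun {x} =>
    mem_sphere_zero_iff_norm
  have hsph_ne0 : ∀ x ∈ sph, x ≠ 0 := by
    intro x hx h0
    rw [hmem_sph, h0] at hx; simp at hx
  -- the normalized eigenvector
  set v : Fin n → ℝ := ⇑(hSym.eigenvectorBasis i0) with hv
  have hv0 : v ≠ 0 := fun h0 => hSym.eigenvectorBasis.orthonormal.ne_zero i0
    (by ext j; simpa [hv] using congrFun h0 j)
  have hhv : 0 < h v := by
    have h1 : ((1 / 2 : ℝ) • (A + Aᵀ)) *ᵥ v = hSym.eigenvalues i0 • v := by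
      rw [hv]; exact hSym.mulVec_eigenvectorBasis i0
    have h2 : (1 / 2 : ℝ) • ((A + Aᵀ) *ᵥ v) = hSym.eigenvalues i0 • v := by
      rw [← smul_mulVec]; exact h1
    have hmv : (A + Aᵀ) *ᵥ v = (2 * hSym.eigenvalues i0) • v := by
      calc (A + Aᵀ) *ᵥ v = (2 : ℝ) • ((1 / 2 : ℝ) • ((A + Aᵀ) *ᵥ v)) := by
            rw [smul_smul]; norm_num
        _ = (2 : ℝ) • (hSym.eigenvalues i0 • v) := by rw [h2]
        _ = (2 * hSym.eigenvalues i0) • v := by rw [smul_smul]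
    have hvv : 0 < v ⬝ᵥ v := by
      rcases (dot_self_nonneg v).lt_or_eq with h1 | h1
      · exact h1
      · exact absurd (dotProduct_self_eq_zero.mp h1.symm) hv0
    rw [hh, qf, hmv, dotProduct_smul, smul_eq_mul]
    positivity
  set u : Fin n → ℝ := ‖v‖⁻¹ • v with hu
  have hvn0 : ‖v‖ ≠ 0 := norm_ne_zero_iff.mpr hv0
  have hu_mem : u ∈ sph := by
    rw [hmem_sph, hu, norm_smul, norm_inv, norm_norm, inv_mul_cancel₀ hvn0]
  have hhu : 0 < h u := by
    rw [hh, hu, qf_smul_vec]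
    have h5 : (0:ℝ) < ‖v‖⁻¹ ^ 2 := by positivity
    exact mul_pos h5 hhv
  -- Step 1 : a large T making the form nonpositive on the sphere
  obtain ⟨T, hT0, hT⟩ : ∃ T : ℝ, 0 ≤ T ∧ ∀ x ∈ sph, h x - 2 * T * g x ≤ 0 := by
    by_cases hS : (sph ∩ {x | 0 ≤ h x}).Nonempty
    · have hSScpt : IsCompact (sph ∩ {x | 0 ≤ h x}) :=
        hsph_cpt.inter_right (isClosed_le continuous_const (continuous_qf _))
      obtain ⟨xm, hxm, hxmle⟩ := hSScpt.exists_isMinOn hS (continuous_qf P).continuousOn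
      obtain ⟨xM, hxM, hxMge⟩ :=
        hsph_cpt.exists_isMaxOn ⟨u, hu_mem⟩ (continuous_qf (A + Aᵀ)).continuousOn
      have hm0 : 0 < g xm := by
        rcases (hg0 xm).lt_or_eq with h1 | h1
        · exact h1
        · exact absurd (hker xm (hsph_ne0 xm hxm.1) (hgz xm h1.symm)) (not_lt.mpr hxm.2)
      have hC0 : 0 ≤ h xM := le_trans hxm.2 (hxMge hxm.1)
      refine ⟨h xM / (2 * g xm), by positivity, ?_⟩
      intro x hx
      by_cases hhx : 0 ≤ h x
      · have hgx : g xm ≤ g x := hxmle ⟨hx, hhx⟩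
        have hhx2 : h x ≤ h xM := hxMge hx
        have hd0 : 0 ≤ h xM / (2 * g xm) := by positivity
        have hd : h xM = 2 * (h xM / (2 * g xm)) * g xm := by field_simp
        nlinarith [mul_le_mul_of_nonneg_left hgx hd0]
      · push_neg at hhx
        nlinarith [hg0 x, div_nonneg hC0 (by positivity : (0:ℝ) ≤ 2 * g xm)]
    · refine ⟨0, le_refl _, ?_⟩
      intro x hx
      have hneg : ¬ (0 ≤ h x) := fun hcon => hS ⟨x, hx, hcon⟩
      push_neg at hneg
      nlinarith [hg0 x]
  -- Step 2 : the sup function and its properties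
  set Φ : ℝ → (Fin n → ℝ) → ℝ := fun t x => h x - 2 * t * g x with hΦ
  have hΦcont : ∀ t, Continuous (Φ t) := fun t =>
    (continuous_qf _).sub (continuous_const.mul (continuous_qf _))
  set f : ℝ → ℝ := fun t => sSup (Φ t '' sph) with hf
  have himg_cpt : ∀ t, IsCompact (Φ t '' sph) := fun t => hsph_cpt.image (hΦcont t)
  have himg_ne : ∀ t, (Φ t '' sph).Nonempty := fun t => ⟨_, u, hu_mem, rfl⟩
  have hfmem : ∀ t, f t ∈ Φ t '' sph := fun t => (himg_cpt t).sSup_mem (himg_ne t)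
  have hfle : ∀ t, ∀ x ∈ sph, Φ t x ≤ f t := fun t x hx =>
    le_csSup (himg_cpt t).bddAbove ⟨x, hx, rfl⟩
  -- Lipschitz-type bound
  obtain ⟨xg, hxg, hxggmax⟩ :=
    hsph_cpt.exists_isMaxOn ⟨u, hu_mem⟩ (continuous_qf P).continuousOn
  set Cg := g xg with hCg
  have hCg0 : 0 ≤ Cg := hg0 xg
  have hlip : ∀ s t : ℝ, f t ≤ f s + 2 * Cg * |t - s| := by
    intro s t
    obtain ⟨x, hx, hfx⟩ := hfmem t
    have h1 : Φ s x ≤ f s := hfle s x hx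
    have h2 : g x ≤ Cg := hxggmax hx
    have h3 : s - t ≤ |t - s| := by rw [abs_sub_comm]; exact le_abs_self _
    have h4 : (0:ℝ) ≤ |t - s| := abs_nonneg _
    have h5 : 0 ≤ g x := hg0 x
    have h6 : Φ t x = Φ s x + 2 * (s - t) * g x := by rw [hΦ]; ring
    nlinarith [hfx]
  have hfcont : Continuous f := by
    have hL : LipschitzWith (Real.toNNReal (2 * Cg)) f := by
      apply LipschitzWith.of_dist_le_mul
      intro s t
      rw [Real.dist_eq, Real.dist_eq, Real.coe_toNNReal _ (by positivity)]
      rw [abs_sub_le_iff]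
      constructor
      · have := hlip t s
        have h3 : |s - t| = |t - s| := abs_sub_comm _ _
        nlinarith [abs_nonneg (s - t)]
      · have := hlip s t
        have h3 : |s - t| = |t - s| := abs_sub_comm _ _
        nlinarith [abs_nonneg (s - t)]
    exact hL.continuous
  have hf0 : 0 < f 0 := by
    have h1 : Φ 0 u ≤ f 0 := hfle 0 u hu_mem
    have hΦ0 : Φ 0 u = h u := by rw [hΦ]; ring
    linarith
  have hfT : f T ≤ 0 := by
    obtain ⟨x, hx, hfx⟩ := hfmem T
    rw [← hfx]; exact hT x hx
  -- IVT
  obtain ⟨t, _, hft⟩ : ∃ t ∈ Set.Icc 0 T, f t = 0 := by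
    have hsub := intermediate_value_Icc' hT0 hfcont.continuousOn
    exact hsub ⟨hfT, le_of_lt hf0⟩
  -- Step 3 : K := t • Bᵀ is weakly dissipating
  have hq : ∀ x, qf ((A - B * (t • Bᵀ)) + (A - B * (t • Bᵀ))ᵀ) x = Φ t x := fun x => by
    rw [qf_Mt]
  have hall : ∀ x, qf ((A - B * (t • Bᵀ)) + (A - B * (t • Bᵀ))ᵀ) x ≤ 0 := by
    intro x
    by_cases hx0 : x = 0
    · rw [hx0]; simp [qf]
    · have hnx : ‖x‖ ≠ 0 := norm_ne_zero_iff.mpr hx0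
      have hu'mem : ‖x‖⁻¹ • x ∈ sph := by
        rw [hmem_sph, norm_smul, norm_inv, norm_norm, inv_mul_cancel₀ hnx]
      have hxu : x = ‖x‖ • (‖x‖⁻¹ • x) := by
        rw [smul_smul, mul_inv_cancel₀ hnx, one_smul]
      have hle0 : qf ((A - B * (t • Bᵀ)) + (A - B * (t • Bᵀ))ᵀ) (‖x‖⁻¹ • x) ≤ 0 := by
        rw [hq]
        calc Φ t (‖x‖⁻¹ • x) ≤ f t := hfle t _ hu'mem
          _ = 0 := hft
      calc qf ((A - B * (t • Bᵀ)) + (A - B * (t • Bᵀ))ᵀ) x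
          = ‖x‖ ^ 2 * qf ((A - B * (t • Bᵀ)) + (A - B * (t • Bᵀ))ᵀ) (‖x‖⁻¹ • x) := by
            conv_lhs => rw [hxu]
            rw [qf_smul_vec]
        _ ≤ 0 := mul_nonpos_of_nonneg_of_nonpos (by positivity) hle0
  have hpsd : (-((A - B * (t • Bᵀ)) + (A - B * (t • Bᵀ))ᵀ)).PosSemidef := by
    refine .of_dotProduct_mulVec_nonneg (herm_aux _) ?_
    intro x
    rw [star_trivial, neg_mulVec, dotProduct_neg]
    have h1 := hall x
    rw [qf] at h1
    linarith
  obtain ⟨x0, hx0s, hx0⟩ := hfmem t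
  have hx0ne : x0 ≠ 0 := hsph_ne0 x0 hx0s
  have hqx0 : qf ((A - B * (t • Bᵀ)) + (A - B * (t • Bᵀ))ᵀ) x0 = 0 := by
    rw [hq, hx0, hft]
  have hmv0 : ((A - B * (t • Bᵀ)) + (A - B * (t • Bᵀ))ᵀ) *ᵥ x0 = 0 := by
    have h1 := (hpsd.dotProduct_mulVec_zero_iff x0).mp ?_
    · rw [neg_mulVec, neg_eq_zero] at h1; exact h1
    · rw [neg_mulVec, dotProduct_neg, star_trivial]
      rw [qf] at hqx0
      rw [hqx0, neg_zero]
  have hdet : ((A - B * (t • Bᵀ)) + (A - B * (t • Bᵀ))ᵀ).det = 0 :=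
    Matrix.exists_mulVec_eq_zero_iff.mp ⟨x0, hx0ne, hmv0⟩
  exact ⟨t • Bᵀ, hpsd, by rw [hdet]; exact not_isUnit_zero⟩


lemma wd_closed (A : Matrix (Fin n) (Fin n) ℝ) (B : Matrix (Fin n) (Fin q) ℝ) :
    IsClosed (weaklyDissipating A B) := by
  have hMcont : Continuous fun K : Matrix (Fin q) (Fin n) ℝ =>
      (A - B * K) + (A - B * K)ᵀ := by
    have h1 : Continuous fun K : Matrix (Fin q) (Fin n) ℝ => A - B * K :=
      continuous_const.sub (continuous_const.matrix_mul continuous_id)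
    exact h1.add h1.matrix_transpose
  have heq : weaklyDissipating A B =
      (⋂ x : Fin n → ℝ, {K : Matrix (Fin q) (Fin n) ℝ |
        0 ≤ x ⬝ᵥ ((-((A - B * K) + (A - B * K)ᵀ)) *ᵥ x)}) ∩
      {K : Matrix (Fin q) (Fin n) ℝ | ((A - B * K) + (A - B * K)ᵀ).det = 0} := by
    ext K
    constructor
    · rintro ⟨h1, h2⟩
      refine ⟨Set.mem_iInter.mpr fun x => ?_, ?_⟩
      · have := h1.dotProduct_mulVec_nonneg x
        rwa [star_trivial] at this
      · simpa [isUnit_iff_ne_zero, not_not] using h2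
    · rintro ⟨h1, h2⟩
      refine ⟨.of_dotProduct_mulVec_nonneg (herm_aux _) fun x => ?_, ?_⟩
      · rw [star_trivial]
        exact Set.mem_iInter.mp h1 x
      · rw [isUnit_iff_ne_zero, ne_eq, not_not]
        exact h2
  rw [heq]
  apply IsClosed.inter
  · exact isClosed_iInter fun x =>
      isClosed_le continuous_const
        (continuous_const.dotProduct (hMcont.neg.matrix_mulVec continuous_const))
  · exact isClosed_eq hMcont.matrix_det continuous_const

lemma frob_cont : Continuous (frobNorm (q := q) (n := n)) := by
  apply Real.continuous_sqrt.comp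
  exact continuous_finset_sum _ fun i _ =>
    continuous_finset_sum _ fun j _ => (continuous_id.matrix_elem i j).pow 2

lemma abs_le_frob (K : Matrix (Fin q) (Fin n) ℝ) (i : Fin q) (j : Fin n) :
    |K i j| ≤ frobNorm K := by
  rw [frobNorm, ← Real.sqrt_sq_eq_abs]
  apply Real.sqrt_le_sqrt
  calc K i j ^ 2
      ≤ ∑ j', K i j' ^ 2 := Finset.single_le_sum (f := fun j' => K i j' ^ 2)
        (fun j' _ => sq_nonneg _) (Finset.mem_univ j)
    _ ≤ ∑ i', ∑ j', K i' j' ^ 2 := Finset.single_le_sum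
        (f := fun i' => ∑ j', K i' j' ^ 2)
        (fun i' _ => Finset.sum_nonneg fun j' _ => sq_nonneg _) (Finset.mem_univ i)

lemma min_attained {S : Set (Matrix (Fin q) (Fin n) ℝ)} (hcl : IsClosed S)
    (K0 : Matrix (Fin q) (Fin n) ℝ) (hK0 : K0 ∈ S) :
    ∃ Kstar ∈ S, ∀ K ∈ S, frobNorm Kstar ≤ frobNorm K := by
  set R := frobNorm K0 with hR
  have hbox_cpt : IsCompact {K : Matrix (Fin q) (Fin n) ℝ | ∀ i j, K i j ∈ Set.Icc (-R) R} := by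
    have : {K : Matrix (Fin q) (Fin n) ℝ | ∀ i j, K i j ∈ Set.Icc (-R) R} =
        Set.univ.pi fun _ : Fin q => Set.univ.pi fun _ : Fin n => Set.Icc (-R) R := by
      ext K
      constructor
      · intro hK
        exact Set.mem_univ_pi.mpr fun i => Set.mem_univ_pi.mpr fun j => hK i j
      · intro hK i j
        exact Set.mem_univ_pi.mp (Set.mem_univ_pi.mp hK i) j
    rw [this]
    exact isCompact_univ_pi fun _ => isCompact_univ_pi fun _ => isCompact_Icc
  have hmemBox : ∀ (K : Matrix (Fin q) (Fin n) ℝ), frobNorm K ≤ R →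
      K ∈ {K : Matrix (Fin q) (Fin n) ℝ | ∀ i j, K i j ∈ Set.Icc (-R) R} := by
    intro K hK i j
    have := abs_le_frob K i j
    rw [Set.mem_Icc, ← abs_le]
    exact le_trans this hK
  have hc : IsCompact ({K : Matrix (Fin q) (Fin n) ℝ | ∀ i j, K i j ∈ Set.Icc (-R) R} ∩ S) :=
    hbox_cpt.inter_right hcl
  have hne : ({K : Matrix (Fin q) (Fin n) ℝ | ∀ i j, K i j ∈ Set.Icc (-R) R} ∩ S).Nonempty :=
    ⟨K0, hmemBox K0 (le_refl R), hK0⟩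
  obtain ⟨Kstar, hKs, hmin⟩ := hc.exists_isMinOn hne frob_cont.continuousOn
  refine ⟨Kstar, hKs.2, ?_⟩
  intro K hK
  by_cases hKR : frobNorm K ≤ R
  · exact hmin ⟨hmemBox K hKR, hK⟩
  · push_neg at hKR
    calc frobNorm Kstar ≤ frobNorm K0 := hmin ⟨hmemBox K0 (le_refl R), hK0⟩
      _ ≤ frobNorm K := le_of_lt hKR

end WDAux

/-- Proposition 4.2 of the paper: if `A + Aᵀ` is negative definite
on the kernel of `Bᵀ` and the largest eigenvalue of `(A+Aᵀ)/2` is positive, then the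
set of weakly dissipating feedbacks is nonempty and the infimum of the Frobenius norm
over it is attained. -/
theorem min_frobenius_weakly_dissipating_attained {n q : ℕ}
    (A : Matrix (Fin n) (Fin n) ℝ) (B : Matrix (Fin n) (Fin q) ℝ)
    (hker : ∀ x : Fin n → ℝ, x ≠ 0 → Bᵀ *ᵥ x = 0 → x ⬝ᵥ ((A + Aᵀ) *ᵥ x) < 0)
    (hSym : ((1 / 2 : ℝ) • (A + Aᵀ)).IsHermitian)
    (hpos : ∃ i, 0 < hSym.eigenvalues i) :
    (weaklyDissipating A B).Nonempty ∧
      ∃ Kstar ∈ weaklyDissipating A B,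
        ∀ K ∈ weaklyDissipating A B, frobNorm Kstar ≤ frobNorm K := by
  obtain ⟨K0, hK0⟩ := WDAux.exists_wd A B hker hSym hpos
  have hK0' : K0 ∈ weaklyDissipating A B := hK0
  exact ⟨⟨K0, hK0'⟩, WDAux.min_attained (WDAux.wd_closed A B) K0 hK0'⟩
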